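/- Let P satisfy Assumption (A) with constants ρ ∈ (0,1), C0 < ∞ and function V, and suppose the resampling schedule (a_k) satisfies δ_k → ∞ as k → ∞. Then ⦀L^(n) − π⦀_V → 0 as n → ∞; in particular the chain with resampling from the past has limit distribution π. -/

import Mathlib

open MeasureTheory Filter
open scoped ENNReal

namespace ResamplingFromThePastLimit

variable {X : Type*} [MeasurableSpace X]

/-- `iter P n` is the `n`-step transition kernel `P^n`. -/
noncomputable def iter (P : X → Measure X) : ℕ → X → Measure X
  | 0 => fun x => Measure.dirac x
  | n + 1 => fun x => (iter P n x).bind P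

/-- `u ρ a 1 = -a₁ log ρ` and `u ρ a k = log (a_k) - log (1/(1-ρ) + a_{k-1})` for `k ≥ 2`. -/
noncomputable def u (ρ : ℝ) (a : ℕ → ℕ) : ℕ → ℝ
  | 0 => 0
  | 1 => -(a 1 : ℝ) * Real.log ρ
  | k + 2 => Real.log (a (k + 2) : ℝ) - Real.log (1 / (1 - ρ) + (a (k + 1) : ℝ))

/-- `δ_k = Σ_{j=1}^k u_j`. -/
noncomputable def delta (ρ : ℝ) (a : ℕ → ℕ) (k : ℕ) : ℝ :=
  ∑ j ∈ Finset.Icc 1 k, u ρ a j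

/-! ### Auxiliary: the scalar sequence `r` -/

open scoped Classical in
/-- Auxiliary pair `(r n, ∑_{j<n} r j)` for the scalar recursion mirroring `L`. -/
noncomputable def rAux (ρ : ℝ) (a : ℕ → ℕ) : ℕ → ℝ × ℝ
  | 0 => (1, 0)
  | n + 1 =>
      let p := rAux ρ a n
      (if ∃ k, 1 ≤ k ∧ a k = n + 1 then ((n + 1 : ℝ))⁻¹ * (p.2 + p.1) else ρ * p.1,
        p.2 + p.1)

/-- The scalar sequence dominating the `V`-norm of `L^(n) - π` (up to a factor `C0`). -/
noncomputable def r (ρ : ℝ) (a : ℕ → ℕ) (n : ℕ) : ℝ := (rAux ρ a n).1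

lemma rAux_snd (ρ : ℝ) (a : ℕ → ℕ) (n : ℕ) :
    (rAux ρ a n).2 = ∑ j ∈ Finset.range n, r ρ a j := by
  induction n with
  | zero => simp [rAux]
  | succ n ih => rw [Finset.sum_range_succ, ← ih]; simp [rAux, r]

lemma r_zero (ρ : ℝ) (a : ℕ → ℕ) : r ρ a 0 = 1 := rfl

lemma r_res (ρ : ℝ) (a : ℕ → ℕ) {n : ℕ} (h : ∃ k, 1 ≤ k ∧ a k = n + 1) :
    r ρ a (n + 1) = ((n + 1 : ℝ))⁻¹ * ∑ j ∈ Finset.range (n + 1), r ρ a j := by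
  rw [Finset.sum_range_succ, ← rAux_snd]
  simp only [r, rAux, if_pos h]

lemma r_step (ρ : ℝ) (a : ℕ → ℕ) {n : ℕ} (h : ¬ ∃ k, 1 ≤ k ∧ a k = n + 1) :
    r ρ a (n + 1) = ρ * r ρ a n := by
  simp only [r, rAux, if_neg h]

lemma r_pos (ρ : ℝ) (a : ℕ → ℕ) (hρ : 0 < ρ) : ∀ n, 0 < r ρ a n := by
  intro n
  induction n using Nat.strong_induction_on with
  | _ n ih =>
    match n with
    | 0 => norm_num [r_zero]
    | n + 1 =>
      by_cases h : ∃ k, 1 ≤ k ∧ a k = n + 1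
      · rw [r_res ρ a h]
        have : (0:ℝ) < ∑ j ∈ Finset.range (n + 1), r ρ a j :=
          Finset.sum_pos (fun j hj => ih j (Finset.mem_range.mp hj)) ⟨0, by simp⟩
        positivity
      · rw [r_step ρ a h]
        exact mul_pos hρ (ih n (by omega))

lemma r_le_one (ρ : ℝ) (a : ℕ → ℕ) (hρ0 : 0 < ρ) (hρ1 : ρ < 1) : ∀ n, r ρ a n ≤ 1 := by
  intro n
  induction n using Nat.strong_induction_on with
  | _ n ih =>
    match n with
    | 0 => simp [r_zero]
    | n + 1 =>
      by_cases h : ∃ k, 1 ≤ k ∧ a k = n + 1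
      · rw [r_res ρ a h]
        have hs : ∑ j ∈ Finset.range (n + 1), r ρ a j ≤ (n + 1 : ℝ) := by
          calc ∑ j ∈ Finset.range (n + 1), r ρ a j ≤ ∑ _j ∈ Finset.range (n + 1), (1:ℝ) :=
                Finset.sum_le_sum (fun j hj => ih j (Finset.mem_range.mp hj))
            _ = (n + 1 : ℝ) := by simp
        rw [inv_mul_le_iff₀ (by positivity)]
        linarith
      · rw [r_step ρ a h]
        have := r_pos ρ a hρ0 n
        nlinarith [ih n (by omega)]

lemma r_res' (ρ : ℝ) (a : ℕ → ℕ) {n : ℕ} (hn : 1 ≤ n) (h : ∃ k, 1 ≤ k ∧ a k = n) :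
    r ρ a n = ((n : ℝ))⁻¹ * ∑ j ∈ Finset.range n, r ρ a j := by
  obtain ⟨m, rfl⟩ : ∃ m, n = m + 1 := ⟨n - 1, by omega⟩
  have := r_res ρ a h
  push_cast at this ⊢
  exact this

/-! ### Combinatorics of the schedule `a` -/

section Schedule

variable (ρ : ℝ) (a : ℕ → ℕ)
  (ha1 : 1 ≤ a 1) (hamono : ∀ k, 1 ≤ k → a k < a (k + 1))
  (hρ0 : 0 < ρ) (hρ1 : ρ < 1)

section
include hamono

lemma a_mono : ∀ k l, 1 ≤ k → k ≤ l → a k ≤ a l := by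
  intro k l hk hkl
  induction l with
  | zero => omega
  | succ l ih =>
    rcases Nat.lt_or_ge k (l+1) with h | h
    · have hkl' : k ≤ l := by omega
      exact le_trans (ih hkl') (le_of_lt (hamono l (by omega)))
    · have : k = l + 1 := by omega
      exact this ▸ le_rfl

include ha1 in
lemma a_ge_one : ∀ k, 1 ≤ k → 1 ≤ a k := fun k hk =>
  le_trans ha1 (a_mono a hamono 1 k le_rfl hk)

include ha1 in
lemma a_ge_self : ∀ k, 1 ≤ k → k ≤ a k := by
  intro k hk
  induction k with
  | zero => omega
  | succ k ih =>
    rcases Nat.eq_or_lt_of_le hk with h | h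
    · have hk0 : k = 0 := by omega
      subst hk0
      exact ha1
    · have := ih (by omega); have := hamono k (by omega); omega

lemma no_res_between {k n : ℕ} (hk : 1 ≤ k) (h1 : a k < n) (h2 : n < a (k + 1)) :
    ¬ ∃ j, 1 ≤ j ∧ a j = n := by
  rintro ⟨j, hj, rfl⟩
  rcases Nat.lt_or_ge j (k+1) with h | h
  · have : a j ≤ a k := a_mono a hamono j k hj (by omega); omega
  · have : a (k+1) ≤ a j := a_mono a hamono (k+1) j (by omega) h; omega

lemma r_block {k : ℕ} (hk : 1 ≤ k) : ∀ m : ℕ, a k + m < a (k + 1) →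
    r ρ a (a k + m) = ρ ^ m * r ρ a (a k) := by
  intro m
  induction m with
  | zero => simp
  | succ m ih =>
    intro hm
    have h1 : a k + m < a (k+1) := by omega
    have hnr : ¬ ∃ j, 1 ≤ j ∧ a j = (a k + m) + 1 :=
      no_res_between a hamono hk (by omega) (by omega)
    have : a k + (m+1) = (a k + m) + 1 := by omega
    rw [this, r_step ρ a hnr, ih h1]
    ring

end

include ha1 hamono in
lemma sum_range_ak {k : ℕ} (hk : 1 ≤ k) :
    ∑ j ∈ Finset.range (a k), r ρ a j = (a k : ℝ) * r ρ a (a k) := by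
  have h1 : 1 ≤ a k := a_ge_one a ha1 hamono k hk
  obtain ⟨m, hm⟩ : ∃ m, a k = m + 1 := ⟨a k - 1, by omega⟩
  have := r_res ρ a (n := m) ⟨k, hk, hm⟩
  rw [hm] at *
  push_cast at this ⊢
  rw [this]
  field_simp

include ha1 hamono hρ0 hρ1 in
lemma r_ak_succ_le {k : ℕ} (hk : 1 ≤ k) :
    r ρ a (a (k + 1)) ≤ ((a k : ℝ) + (1 - ρ)⁻¹) / (a (k + 1) : ℝ) * r ρ a (a k) := by
  have hak1 : 1 ≤ a (k+1) := a_ge_one a ha1 hamono (k+1) (by omega)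
  have hlt : a k < a (k+1) := hamono k hk
  obtain ⟨m, hm⟩ : ∃ m, a (k+1) = m + 1 := ⟨a (k+1) - 1, by omega⟩
  have hres := r_res ρ a (n := m) ⟨k+1, by omega, hm⟩
  rw [← hm] at hres
  have hsplit : ∑ j ∈ Finset.range (a (k+1)), r ρ a j
      = ∑ j ∈ Finset.range (a k), r ρ a j
        + ∑ i ∈ Finset.range (a (k+1) - a k), r ρ a (a k + i) := by
    have h1 : ∑ j ∈ Finset.Ico 0 (a (k+1)), r ρ a j
        = ∑ j ∈ Finset.Ico 0 (a k), r ρ a j + ∑ j ∈ Finset.Ico (a k) (a (k+1)), r ρ a j :=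
      (Finset.sum_Ico_consecutive _ (Nat.zero_le _) (le_of_lt hlt)).symm
    have h2 : ∑ j ∈ Finset.Ico (a k) (a (k+1)), r ρ a j
        = ∑ i ∈ Finset.range (a (k+1) - a k), r ρ a (a k + i) :=
      Finset.sum_Ico_eq_sum_range _ _ _
    rw [Finset.range_eq_Ico, h1, h2, ← Finset.range_eq_Ico]
  have hgeom : ∑ i ∈ Finset.range (a (k+1) - a k), r ρ a (a k + i)
      ≤ (1 - ρ)⁻¹ * r ρ a (a k) := by
    have hb : ∀ i ∈ Finset.range (a (k+1) - a k), r ρ a (a k + i) = ρ ^ i * r ρ a (a k) := by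
      intro i hi
      exact r_block ρ a hamono hk i (by simp at hi; omega)
    rw [Finset.sum_congr rfl hb, ← Finset.sum_mul]
    have hg : ∑ i ∈ Finset.range (a (k+1) - a k), ρ ^ i ≤ (1 - ρ)⁻¹ := by
      set n := a (k+1) - a k
      have h1 : (0:ℝ) < 1 - ρ := by linarith
      have hgm := geom_sum_mul ρ n
      have hpow : (0:ℝ) < ρ ^ n := pow_pos hρ0 n
      have hinv : (1 - ρ) * (1 - ρ)⁻¹ = 1 := mul_inv_cancel₀ (ne_of_gt h1)
      nlinarith [hgm, hpow, hinv]
    exact mul_le_mul_of_nonneg_right hg (le_of_lt (r_pos ρ a hρ0 _))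
  have hsum_ak := sum_range_ak ρ a ha1 hamono hk
  have hpos : (0:ℝ) < (a (k+1) : ℝ) := by exact_mod_cast hak1
  have hcast : ((m:ℝ) + 1) = (a (k+1) : ℝ) := by exact_mod_cast hm.symm
  rw [hres, hcast, hsplit, hsum_ak, inv_mul_le_iff₀ hpos]
  have heq : (a (k+1):ℝ) * (((a k : ℝ) + (1-ρ)⁻¹)/(a (k+1):ℝ) * r ρ a (a k))
      = ((a k : ℝ) + (1-ρ)⁻¹) * r ρ a (a k) := by
    field_simp
  rw [heq]
  nlinarith [hgeom]

include ha1 hamono hρ0 hρ1 in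
lemma r_ak_le_exp : ∀ k, 1 ≤ k →
    r ρ a (a k) ≤ Real.exp (-(delta ρ a k)) * (ρ⁻¹) ^ (a 1) := by
  intro k hk
  induction k with
  | zero => omega
  | succ k ih =>
    rcases Nat.eq_or_lt_of_le hk with h | h
    · have hk0 : k = 0 := by omega
      subst hk0
      have hδ : delta ρ a 1 = -(a 1 : ℝ) * Real.log ρ := by
        simp [delta, u]
      have hexp : Real.exp (-(delta ρ a 1)) = ρ ^ (a 1) := by
        rw [hδ, neg_mul, neg_neg, Real.exp_nat_mul, Real.exp_log hρ0]
      rw [hexp, ← mul_pow, mul_inv_cancel₀ (ne_of_gt hρ0), one_pow]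
      exact r_le_one ρ a hρ0 hρ1 (a 1)
    · have hk1 : 1 ≤ k := by omega
      have ihk := ih hk1
      have hstep := r_ak_succ_le ρ a ha1 hamono hρ0 hρ1 hk1
      have hδ : delta ρ a (k+1) = delta ρ a k + u ρ a (k+1) := by
        rw [delta, delta, Finset.sum_Icc_succ_top (by omega : 1 ≤ k + 1)]
      have hu : Real.exp (-(u ρ a (k+1))) = ((a k : ℝ) + (1 - ρ)⁻¹) / (a (k+1) : ℝ) := by
        obtain ⟨j, hj⟩ : ∃ j, k = j + 1 := ⟨k - 1, by omega⟩
        subst hj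
        show Real.exp (-(u ρ a (j + 2))) = _
        have hak : (0:ℝ) < (a (j+2) : ℝ) := by
          exact_mod_cast a_ge_one a ha1 hamono (j+2) (by omega)
        have hc : (0:ℝ) < 1 / (1 - ρ) + (a (j+1) : ℝ) := by
          have h1 : (0:ℝ) < 1 - ρ := by linarith
          have : (0:ℝ) ≤ (a (j+1) : ℝ) := Nat.cast_nonneg _
          positivity
        rw [show u ρ a (j+2)
          = Real.log (a (j + 2) : ℝ) - Real.log (1 / (1 - ρ) + (a (j + 1) : ℝ)) from rfl]
        rw [neg_sub, Real.exp_sub, Real.exp_log hc, Real.exp_log hak]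
        rw [one_div]
        ring_nf
      calc r ρ a (a (k+1)) ≤ ((a k : ℝ) + (1 - ρ)⁻¹) / (a (k+1) : ℝ) * r ρ a (a k) := hstep
        _ ≤ ((a k : ℝ) + (1 - ρ)⁻¹) / (a (k+1) : ℝ)
            * (Real.exp (-(delta ρ a k)) * (ρ⁻¹) ^ (a 1)) := by
            apply mul_le_mul_of_nonneg_left ihk
            rw [← hu]
            positivity
        _ = Real.exp (-(delta ρ a (k+1))) * (ρ⁻¹) ^ (a 1) := by
            rw [hδ, neg_add, Real.exp_add, ← hu]
            ring

include ha1 hamono hρ0 hρ1 in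
lemma r_le_block {k n : ℕ} (hk : 1 ≤ k) (h1 : a k ≤ n) (h2 : n < a (k + 1)) :
    r ρ a n ≤ r ρ a (a k) := by
  obtain ⟨m, rfl⟩ : ∃ m, n = a k + m := ⟨n - a k, by omega⟩
  rw [r_block ρ a hamono hk m h2]
  have h3 := r_pos ρ a hρ0 (a k)
  have h4 : ρ ^ m ≤ 1 := pow_le_one₀ (le_of_lt hρ0) (le_of_lt hρ1)
  nlinarith

include ha1 hamono hρ0 hρ1 in
lemma C0r_small (C0 : ℝ) (hC0 : 0 ≤ C0)
    (hdelta : Tendsto (delta ρ a) atTop atTop) :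
    ∀ ε : ℝ, 0 < ε → ∃ N : ℕ, ∀ n, N ≤ n → C0 * r ρ a n ≤ ε := by
  intro ε hε
  set Q : ℝ := (ρ⁻¹) ^ (a 1) with hQdef
  have hQ : 0 < Q := by positivity
  set b : ℝ := Real.log ((C0 + 1) * Q / ε) with hbdef
  obtain ⟨K, hK⟩ := (hdelta.eventually_ge_atTop b).exists_forall_of_atTop
  set K' := max K 1 with hK'def
  refine ⟨a K', fun n hn => ?_⟩
  have hK'1 : 1 ≤ K' := le_max_right _ _
  have hK'n : K' ≤ n := le_trans (a_ge_self a ha1 hamono K' hK'1) hn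
  set P : ℕ → Prop := fun j => K' ≤ j ∧ a j ≤ n with hPdef
  classical
  set k := Nat.findGreatest P n with hkdef
  have hPk : P k := Nat.findGreatest_spec (m := K') hK'n ⟨le_rfl, hn⟩
  have hk1 : 1 ≤ k := le_trans hK'1 hPk.1
  have hkn : k ≤ n := Nat.findGreatest_le n
  have hlt : n < a (k + 1) := by
    by_contra h
    push_neg at h
    have hP1 : P (k + 1) := ⟨le_trans hPk.1 (by omega), h⟩
    have hle : k + 1 ≤ n := le_trans (a_ge_self a ha1 hamono (k+1) (by omega)) h
    exact Nat.findGreatest_is_greatest (Nat.lt_succ_self k) hle hP1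
  have hrle : r ρ a n ≤ Real.exp (-(delta ρ a k)) * Q :=
    le_trans (r_le_block ρ a ha1 hamono hρ0 hρ1 hk1 hPk.2 hlt)
      (r_ak_le_exp ρ a ha1 hamono hρ0 hρ1 k hk1)
  have hdk : b ≤ delta ρ a k := hK k (le_trans (le_max_left K 1) hPk.1)
  have hexp : Real.exp (-(delta ρ a k)) ≤ ε / ((C0 + 1) * Q) := by
    rw [Real.exp_neg]
    have he : Real.exp b = (C0 + 1) * Q / ε := Real.exp_log (by positivity)
    have h1 : Real.exp b ≤ Real.exp (delta ρ a k) := Real.exp_le_exp.mpr hdk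
    have h2 : (Real.exp (delta ρ a k))⁻¹ ≤ (Real.exp b)⁻¹ :=
      inv_anti₀ (Real.exp_pos b) h1
    rw [he, inv_div] at h2
    exact h2
  have hrpos := r_pos ρ a hρ0 n
  calc C0 * r ρ a n ≤ C0 * (ε / ((C0 + 1) * Q) * Q) := by
        apply mul_le_mul_of_nonneg_left _ hC0
        calc r ρ a n ≤ Real.exp (-(delta ρ a k)) * Q := hrle
          _ ≤ ε / ((C0 + 1) * Q) * Q := mul_le_mul_of_nonneg_right hexp (le_of_lt hQ)
    _ = C0 / (C0 + 1) * ε := by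
        field_simp
    _ ≤ 1 * ε := by
        apply mul_le_mul_of_nonneg_right _ (le_of_lt hε)
        rw [div_le_one (by linarith)]
        linarith
    _ = ε := one_mul ε

end Schedule

/-! ### Measure-theoretic preliminaries -/

section MeasureFacts

variable {P : X → Measure X} (hPmeas : Measurable P) (hPprob : ∀ x, IsProbabilityMeasure (P x))

include hPmeas in
lemma iter_meas : ∀ m, Measurable (iter P m)
  | 0 => Measure.measurable_dirac
  | m + 1 => (Measure.measurable_bind' hPmeas).comp (iter_meas m)

include hPmeas hPprob in
lemma bind_prob {μ : Measure X} [IsProbabilityMeasure μ] : IsProbabilityMeasure (μ.bind P) := by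
  constructor
  rw [Measure.bind_apply MeasurableSet.univ hPmeas.aemeasurable]
  simp [fun x => (hPprob x).measure_univ]

include hPmeas hPprob in
lemma iter_prob : ∀ m x, IsProbabilityMeasure (iter P m x)
  | 0, x => by rw [iter]; infer_instance
  | m + 1, x => by
      rw [iter]
      have := iter_prob m x
      exact bind_prob hPmeas hPprob

include hPmeas in
lemma iter_one (x : X) : iter P 1 x = P x := by
  rw [iter, iter]
  exact Measure.dirac_bind hPmeas x

include hPmeas in
lemma iter_succ' : ∀ m (x : X), iter P (m + 1) x = (P x).bind (iter P m)
  | 0, x => by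
      rw [iter_one hPmeas]
      exact (Measure.bind_dirac).symm
  | m + 1, x => by
      show (iter P (m+1) x).bind P = _
      rw [iter_succ' m x, Measure.bind_bind (iter_meas hPmeas m).aemeasurable hPmeas.aemeasurable]
      rfl

/-- the `m`-step kernel -/
noncomputable def iterK (hPmeas : Measurable P) (m : ℕ) : ProbabilityTheory.Kernel X X :=
  ⟨iter P m, iter_meas hPmeas m⟩

include hPprob in
lemma iterK_markov (m : ℕ) : ProbabilityTheory.IsMarkovKernel (iterK hPmeas m) :=
  ⟨fun x => iter_prob hPmeas hPprob m x⟩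

include hPmeas hPprob in
lemma meas_int {f : X → ℝ} (hf : Measurable f) (m : ℕ) :
    Measurable fun y => ∫ z, f z ∂iter P m y := by
  haveI := iterK_markov hPmeas hPprob m
  have h : StronglyMeasurable fun p : X × X => f p.2 :=
    (hf.comp measurable_snd).stronglyMeasurable
  have := h.integral_kernel_prod_right' (κ := iterK hPmeas m)
  exact this.measurable

/-- Bochner integral against a bind of a measure and a kernel. -/
lemma integral_bind {μ : Measure X} [SFinite μ] {κ : ProbabilityTheory.Kernel X X}
    [ProbabilityTheory.IsSFiniteKernel κ]
    {g : X → ℝ} (hg : Measurable g) (hint : Integrable g (μ.bind κ)) :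
    ∫ y, g y ∂(μ.bind ⇑κ) = ∫ x, ∫ y, g y ∂(κ x) ∂μ := by
  have hbs : μ.bind ⇑κ = (μ.compProd κ).snd := by
    ext s hs
    rw [Measure.bind_apply hs κ.measurable.aemeasurable, Measure.snd_apply hs,
      Measure.compProd_apply (measurable_snd hs)]
    rfl
  have hmap : (μ.compProd κ).snd = (μ.compProd κ).map Prod.snd := rfl
  have hci : Integrable (fun p : X × X => g p.2) (μ.compProd κ) := by
    have := hint
    rw [hbs, hmap] at this
    exact (integrable_map_measure hg.aestronglyMeasurable measurable_snd.aemeasurable).mp this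
  rw [hbs, hmap, integral_map measurable_snd.aemeasurable hg.aestronglyMeasurable]
  rw [Measure.integral_compProd hci]

lemma nonempty_of_prob (π : Measure X) [IsProbabilityMeasure π] : Nonempty X := by
  by_contra h
  rw [not_nonempty_iff] at h
  have h1 : π Set.univ = 1 := measure_univ
  rw [Set.univ_eq_empty_iff.mpr h, measure_empty] at h1
  exact zero_ne_one h1

variable {V : X → ℝ} (hVmeas : Measurable V) (hV1 : ∀ x, 1 ≤ V x)

include hVmeas hV1 in
lemma integrable_of_trunc {μ : Measure X} [IsFiniteMeasure μ] {B : ℝ}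
    (h : ∀ M : ℕ, ∫ x, min (V x) (M : ℝ) ∂μ ≤ B) : Integrable V μ := by
  have hV0 : ∀ x, 0 ≤ V x := fun x => le_trans zero_le_one (hV1 x)
  have hVMmeas : ∀ M : ℕ, Measurable fun x => min (V x) (M : ℝ) := fun M =>
    hVmeas.min measurable_const
  have hVMint : ∀ M : ℕ, Integrable (fun x => min (V x) (M : ℝ)) μ := by
    intro M
    refine (integrable_const (M : ℝ)).mono' ((hVMmeas M).aestronglyMeasurable) ?_
    refine Eventually.of_forall fun x => ?_
    rw [Real.norm_eq_abs, abs_of_nonneg (le_min (hV0 x) (Nat.cast_nonneg M))]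
    exact min_le_right _ _
  have hkey : ∫⁻ x, ENNReal.ofReal (V x) ∂μ ≤ ENNReal.ofReal B := by
    have hmono : Monotone fun (M : ℕ) (x : X) => ENNReal.ofReal (min (V x) (M : ℝ)) := by
      intro M N hMN x
      exact ENNReal.ofReal_le_ofReal (min_le_min le_rfl (Nat.cast_le.mpr hMN))
    have hsup : ∀ x, ⨆ M : ℕ, ENNReal.ofReal (min (V x) (M : ℝ)) = ENNReal.ofReal (V x) := by
      intro x
      apply le_antisymm
      · exact iSup_le fun M => ENNReal.ofReal_le_ofReal (min_le_left _ _)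
      · refine le_iSup_of_le ⌈V x⌉₊ ?_
        rw [min_eq_left (Nat.le_ceil (V x))]
    have hlin := lintegral_iSup (fun M => (hVMmeas M).ennreal_ofReal) hmono (μ := μ)
    have heq : ∫⁻ x, ENNReal.ofReal (V x) ∂μ
        = ⨆ M : ℕ, ∫⁻ x, ENNReal.ofReal (min (V x) (M : ℝ)) ∂μ := by
      rw [← hlin]
      congr 1
      funext x
      exact (hsup x).symm
    rw [heq]
    refine iSup_le fun M => ?_
    rw [← ofReal_integral_eq_lintegral_ofReal (hVMint M)
      (Eventually.of_forall fun x => le_min (hV0 x) (Nat.cast_nonneg M))]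
    exact ENNReal.ofReal_le_ofReal (h M)
  refine ⟨hVmeas.aestronglyMeasurable, ?_⟩
  rw [hasFiniteIntegral_iff_ofReal (Eventually.of_forall hV0)]
  exact lt_of_le_of_lt hkey ENNReal.ofReal_lt_top

end MeasureFacts

/-! ### Main theorem -/

/-- Under Assumption (A), if the resampling schedule satisfies `δ_k → ∞`,
then `⦀L^(n) − π⦀_V → 0` as `n → ∞`: the chain with resampling from the past has limit
distribution `π`.  Convergence of the `V`-norm to `0` is expressed by: for every `ε > 0`
there is `N` such that for all `n ≥ N` and all measurable `f` with `|f|_V ≤ 1`,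
`|L^(n)f(x) − π(f)| ≤ ε V(x)` for every `x`. -/
theorem limit_distribution_of_resampling_from_past
    (P : X → Measure X) (hPmeas : Measurable P)
    (hPprob : ∀ x, IsProbabilityMeasure (P x))
    (π : Measure X) (hπ : IsProbabilityMeasure π) (hinv : π.bind P = π)
    (V : X → ℝ) (hVmeas : Measurable V) (hV1 : ∀ x, 1 ≤ V x)
    (ρ C0 : ℝ) (hρ0 : 0 < ρ) (hρ1 : ρ < 1) (hC0 : 0 ≤ C0)
    -- Assumption (A): `⦀P^n − π⦀_V ≤ C0 ρ^n` for all `n ≥ 0`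
    (hA : ∀ f : X → ℝ, Measurable f → (∀ x, |f x| ≤ V x) →
      ∀ (n : ℕ) (x : X),
        |∫ y, f y ∂(iter P n x) - ∫ y, f y ∂π| ≤ C0 * ρ ^ n * V x)
    -- the resampling schedule: a strictly increasing sequence of positive integers
    (a : ℕ → ℕ) (ha1 : 1 ≤ a 1) (hamono : ∀ k, 1 ≤ k → a k < a (k + 1))
    -- the resampling schedule satisfies `δ_k → ∞`
    (hdelta : Tendsto (delta ρ a) atTop atTop)
    -- the laws `L^(n)(x,·)` of the chain with resampling from the past, burn-in 0
    (L : ℕ → X → Measure X)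
    (hL0 : ∀ x, L 0 x = Measure.dirac x)
    (hLstep : ∀ n : ℕ, 1 ≤ n → (¬ ∃ k, 1 ≤ k ∧ a k = n) →
      ∀ x, L n x = (L (n - 1) x).bind P)
    (hLres : ∀ k, 1 ≤ k →
      ∀ x, L (a k) x = ((a k : ℝ≥0∞))⁻¹ • ∑ j ∈ Finset.range (a k), L j x) :
    ∀ ε : ℝ, 0 < ε → ∃ N : ℕ, ∀ n : ℕ, N ≤ n →
      ∀ f : X → ℝ, Measurable f → (∀ x, |f x| ≤ V x) →
        ∀ x, |∫ y, f y ∂(L n x) - ∫ y, f y ∂π| ≤ ε * V x := by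
  classical
  have hV0 : ∀ x, 0 ≤ V x := fun x => le_trans zero_le_one (hV1 x)
  have hVabs : ∀ x, |V x| ≤ V x := fun x => le_of_eq (abs_of_nonneg (hV0 x))
  obtain ⟨x₀⟩ : Nonempty X := nonempty_of_prob π
  have hρm1 : ∀ m : ℕ, ρ ^ m ≤ 1 := fun m => pow_le_one₀ (le_of_lt hρ0) (le_of_lt hρ1)
  -- truncations are admissible test functions
  have htm : ∀ M : ℕ, Measurable fun x => min (V x) (M : ℝ) := fun M =>
    hVmeas.min measurable_const
  have htb : ∀ M : ℕ, ∀ x, |min (V x) (M : ℝ)| ≤ V x := by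
    intro M x
    rw [abs_of_nonneg (le_min (hV0 x) (Nat.cast_nonneg M))]
    exact min_le_left _ _
  -- `V` is integrable with respect to `π`
  have hπV : Integrable V π := by
    apply integrable_of_trunc hVmeas hV1 (B := (1 + C0) * V x₀)
    intro M
    have hh := hA _ (htm M) (htb M) 0 x₀
    rw [show iter P 0 x₀ = Measure.dirac x₀ from rfl,
      integral_dirac' _ _ (htm M).stronglyMeasurable, pow_zero] at hh
    have h1 := (abs_le.mp hh).1
    have h2 : min (V x₀) (M : ℝ) ≤ V x₀ := min_le_left _ _
    nlinarith [hV0 x₀]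
  -- `V` is integrable with respect to each `iter P m x`
  have hiterV : ∀ m x, Integrable V (iter P m x) := by
    intro m x
    haveI := iter_prob hPmeas hPprob m x
    apply integrable_of_trunc hVmeas hV1 (B := (∫ y, V y ∂π) + C0 * V x)
    intro M
    have hh := hA _ (htm M) (htb M) m x
    have h1 := (abs_le.mp hh).2
    have h2 : ∫ y, min (V y) (M : ℝ) ∂π ≤ ∫ y, V y ∂π := by
      apply integral_mono _ hπV (fun y => min_le_left _ _)
      refine (integrable_const (M : ℝ)).mono' ((htm M).aestronglyMeasurable) ?_
      refine Eventually.of_forall fun y => ?_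
      rw [Real.norm_eq_abs, abs_of_nonneg (le_min (hV0 y) (Nat.cast_nonneg M))]
      exact min_le_right _ _
    have h3 : C0 * ρ ^ m * V x ≤ C0 * V x := by
      nlinarith [mul_nonneg hC0 (hV0 x), hρm1 m, pow_nonneg (le_of_lt hρ0) m]
    linarith
  -- uniform bound for integrals of `V` against `iter P m x`
  have hiter_bound : ∀ m y, ∫ z, V z ∂(iter P m y) ≤ ∫ z, V z ∂π + C0 * V y := by
    intro m y
    have hh := (abs_le.mp (hA V hVmeas hVabs m y)).2
    have h3 : C0 * ρ ^ m * V y ≤ C0 * V y := by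
      nlinarith [mul_nonneg hC0 (hV0 y), hρm1 m, pow_nonneg (le_of_lt hρ0) m]
    linarith
  -- admissible test functions are integrable against `iter P m x`
  have hfiter : ∀ (f : X → ℝ), Measurable f → (∀ x, |f x| ≤ V x) →
      ∀ m y, Integrable f (iter P m y) := by
    intro f hf hfV m y
    refine (hiterV m y).mono hf.aestronglyMeasurable (Eventually.of_forall fun z => ?_)
    rw [Real.norm_eq_abs, Real.norm_eq_abs, abs_of_nonneg (hV0 z)]
    exact hfV z
  -- uniform pointwise bound on `P^m f`
  have habsPm : ∀ (f : X → ℝ), Measurable f → (∀ x, |f x| ≤ V x) →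
      ∀ m y, |∫ z, f z ∂(iter P m y)| ≤ ∫ z, V z ∂π + C0 * V y := by
    intro f hf hfV m y
    have h1 : |∫ z, f z ∂(iter P m y)| ≤ ∫ z, |f z| ∂(iter P m y) := by
      simpa [Real.norm_eq_abs] using norm_integral_le_integral_norm (μ := iter P m y) f
    have h2 : ∫ z, |f z| ∂(iter P m y) ≤ ∫ z, V z ∂(iter P m y) :=
      integral_mono (hfiter f hf hfV m y).abs (hiterV m y) (fun z => hfV z)
    linarith [hiter_bound m y]
  -- every `L n x` is a probability measure
  have hLprob : ∀ n x, IsProbabilityMeasure (L n x) := by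
    intro n
    induction n using Nat.strong_induction_on with
    | _ n ih =>
      intro x
      rcases Nat.eq_zero_or_pos n with rfl | hn
      · rw [hL0 x]; infer_instance
      · by_cases hres : ∃ k, 1 ≤ k ∧ a k = n
        · obtain ⟨k, hk, hak⟩ := hres
          constructor
          rw [← hak, hLres k hk x, Measure.smul_apply, Measure.finset_sum_apply]
          have hone : ∀ j ∈ Finset.range (a k), (L j x) Set.univ = 1 := by
            intro j hj
            have hjn : j < n := by
              rw [← hak]; exact Finset.mem_range.mp hj
            exact (ih j hjn x).measure_univ
          rw [Finset.sum_congr rfl hone, Finset.sum_const, Finset.card_range, nsmul_eq_mul,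
            mul_one, smul_eq_mul]
          have hak0 : (a k : ℝ≥0∞) ≠ 0 := by
            simp only [ne_eq, Nat.cast_eq_zero]
            have := a_ge_one a ha1 hamono k hk
            omega
          exact ENNReal.inv_mul_cancel hak0 (ENNReal.natCast_ne_top _)
        · rw [hLstep n hn hres x]
          haveI := ih (n-1) (by omega) x
          exact bind_prob hPmeas hPprob
  -- `V` is integrable with respect to each `L n x`
  have hLV : ∀ n x, Integrable V (L n x) := by
    intro n
    induction n using Nat.strong_induction_on with
    | _ n ih =>
      intro x
      rcases Nat.eq_zero_or_pos n with rfl | hn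
      · rw [hL0 x]
        refine ⟨hVmeas.aestronglyMeasurable, ?_⟩
        rw [hasFiniteIntegral_iff_ofReal (Eventually.of_forall hV0),
          lintegral_dirac' _ hVmeas.ennreal_ofReal]
        exact ENNReal.ofReal_lt_top
      · by_cases hres : ∃ k, 1 ≤ k ∧ a k = n
        · obtain ⟨k, hk, hak⟩ := hres
          rw [← hak, hLres k hk x]
          have hak0 : (a k : ℝ≥0∞) ≠ 0 := by
            simp only [ne_eq, Nat.cast_eq_zero]
            have := a_ge_one a ha1 hamono k hk
            omega
          rw [integrable_smul_measure (by simp [hak0]) (by simp [hak0])]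
          refine integrable_finset_sum_measure.mpr fun j hj => ?_
          have hjn : j < n := by rw [← hak]; exact Finset.mem_range.mp hj
          exact ih j hjn x
        · rw [hLstep n hn hres x]
          haveI := hLprob (n-1) x
          have hWint : Integrable (fun y => ∫ z, V z ∂π + C0 * V y) (L (n-1) x) :=
            (integrable_const _).add ((ih (n-1) (by omega) x).const_mul C0)
          refine ⟨hVmeas.aestronglyMeasurable, ?_⟩
          rw [hasFiniteIntegral_iff_ofReal (Eventually.of_forall hV0),
            Measure.lintegral_bind hPmeas.aemeasurable hVmeas.ennreal_ofReal.aemeasurable]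
          have hb1 : ∫⁻ y, (∫⁻ z, ENNReal.ofReal (V z) ∂P y) ∂(L (n-1) x)
              ≤ ∫⁻ y, ENNReal.ofReal (∫ z, V z ∂π + C0 * V y) ∂(L (n-1) x) := by
            refine lintegral_mono fun y => ?_
            dsimp only
            have hPyV : Integrable V (P y) := by
              have := hiterV 1 y; rwa [iter_one hPmeas] at this
            rw [← ofReal_integral_eq_lintegral_ofReal hPyV (Eventually.of_forall hV0)]
            apply ENNReal.ofReal_le_ofReal
            have := hiter_bound 1 y; rwa [iter_one hPmeas] at this
          have hb2 : ∫⁻ y, ENNReal.ofReal (∫ z, V z ∂π + C0 * V y) ∂(L (n-1) x)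
              = ENNReal.ofReal (∫ y, (∫ z, V z ∂π + C0 * V y) ∂(L (n-1) x)) := by
            rw [← ofReal_integral_eq_lintegral_ofReal hWint]
            exact Eventually.of_forall fun y =>
              add_nonneg (integral_nonneg hV0) (mul_nonneg hC0 (hV0 y))
          exact lt_of_le_of_lt (le_trans hb1 (le_of_eq hb2)) ENNReal.ofReal_lt_top
  -- admissible `P^m f` integrable against `L n x`
  have hPmfint : ∀ (f : X → ℝ), Measurable f → (∀ x, |f x| ≤ V x) → ∀ m n x,
      Integrable (fun y => ∫ z, f z ∂iter P m y) (L n x) := by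
    intro f hf hfV m n x
    haveI := hLprob n x
    have hWint : Integrable (fun y => ∫ z, V z ∂π + C0 * V y) (L n x) :=
      (integrable_const _).add ((hLV n x).const_mul C0)
    refine hWint.mono' (meas_int hPmeas hPprob hf m).aestronglyMeasurable ?_
    refine Eventually.of_forall fun y => ?_
    rw [Real.norm_eq_abs]
    exact habsPm f hf hfV m y
  -- one-step kernel
  set PK : ProbabilityTheory.Kernel X X := ⟨P, hPmeas⟩ with hPKdef
  haveI : ProbabilityTheory.IsMarkovKernel PK := ⟨hPprob⟩
  have hPK : ⇑PK = P := rfl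
  -- the key estimate, by strong induction
  have key : ∀ n (f : X → ℝ), Measurable f → (∀ x, |f x| ≤ V x) → ∀ (m : ℕ) x,
      |∫ y, (∫ z, f z ∂iter P m y) ∂(L n x) - ∫ y, f y ∂π|
        ≤ C0 * ρ ^ m * r ρ a n * V x := by
    intro n
    induction n using Nat.strong_induction_on with
    | _ n ih =>
      intro f hf hfV m x
      rcases Nat.eq_zero_or_pos n with rfl | hn
      · -- base case
        rw [hL0 x, integral_dirac' _ _ (meas_int hPmeas hPprob hf m).stronglyMeasurable,
          r_zero, mul_one]
        exact hA f hf hfV m x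
      · by_cases hres : ∃ k, 1 ≤ k ∧ a k = n
        · -- resampling step
          obtain ⟨k, hk, hak⟩ := hres
          have hak1 : 1 ≤ a k := a_ge_one a ha1 hamono k hk
          have hakR : (0:ℝ) < (a k : ℝ) := by exact_mod_cast hak1
          rw [← hak, hLres k hk x]
          have hInt : ∀ j ∈ Finset.range (a k),
              Integrable (fun y => ∫ z, f z ∂iter P m y) (L j x) :=
            fun j _ => hPmfint f hf hfV m j x
          rw [integral_smul_measure, integral_finset_sum_measure hInt]
          have htoReal : ((a k : ℝ≥0∞))⁻¹.toReal = ((a k : ℝ))⁻¹ := by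
            rw [ENNReal.toReal_inv]
            simp
          rw [htoReal, smul_eq_mul]
          set I : ℕ → ℝ := fun j => ∫ y, (∫ z, f z ∂iter P m y) ∂(L j x) with hIdef
          have harr : ((a k : ℝ))⁻¹ * (∑ j ∈ Finset.range (a k), I j) - ∫ y, f y ∂π
              = ((a k : ℝ))⁻¹ * ∑ j ∈ Finset.range (a k), (I j - ∫ y, f y ∂π) := by
            rw [Finset.sum_sub_distrib, Finset.sum_const, Finset.card_range, nsmul_eq_mul,
              mul_sub, ← mul_assoc, inv_mul_cancel₀ (ne_of_gt hakR), one_mul]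
          rw [harr, abs_mul, abs_of_nonneg (by positivity : (0:ℝ) ≤ ((a k : ℝ))⁻¹)]
          have hsum : |∑ j ∈ Finset.range (a k), (I j - ∫ y, f y ∂π)|
              ≤ ∑ j ∈ Finset.range (a k), C0 * ρ ^ m * r ρ a j * V x := by
            refine le_trans (Finset.abs_sum_le_sum_abs _ _) (Finset.sum_le_sum fun j hj => ?_)
            have hjn : j < n := by rw [← hak]; exact Finset.mem_range.mp hj
            exact ih j hjn f hf hfV m x
          have hrr : r ρ a (a k) = ((a k : ℝ))⁻¹ * ∑ j ∈ Finset.range (a k), r ρ a j := by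
            apply r_res' ρ a (by omega) ⟨k, hk, hak ▸ rfl⟩
          calc ((a k : ℝ))⁻¹ * |∑ j ∈ Finset.range (a k), (I j - ∫ y, f y ∂π)|
              ≤ ((a k : ℝ))⁻¹ * ∑ j ∈ Finset.range (a k), C0 * ρ ^ m * r ρ a j * V x :=
                mul_le_mul_of_nonneg_left hsum (by positivity)
            _ = C0 * ρ ^ m * r ρ a (a k) * V x := by
                rw [hrr]
                rw [show ∑ j ∈ Finset.range (a k), C0 * ρ ^ m * r ρ a j * V x
                  = C0 * ρ ^ m * V x * ∑ j ∈ Finset.range (a k), r ρ a j by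
                    rw [Finset.mul_sum]; exact Finset.sum_congr rfl fun j _ => by ring]
                ring
        · -- deterministic step
          have hLs := hLstep n hn hres x
          obtain ⟨n', rfl⟩ : ∃ n', n = n' + 1 := ⟨n - 1, by omega⟩
          simp only [Nat.add_sub_cancel] at hLs
          rw [hLs]
          haveI := hLprob n' x
          have hbind : (L n' x).bind P = (L n' x).bind ⇑PK := by rw [hPK]
          have hgint : Integrable (fun y => ∫ z, f z ∂iter P m y) ((L n' x).bind ⇑PK) := by
            rw [hPK, ← hLs]
            exact hPmfint f hf hfV m (n'+1) x
          rw [hbind, integral_bind (meas_int hPmeas hPprob hf m) hgint]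
          have hinner : ∀ y, ∫ z, (∫ w, f w ∂iter P m z) ∂(PK y) = ∫ w, f w ∂iter P (m+1) y := by
            intro y
            haveI := hPprob y
            haveI := iterK_markov hPmeas hPprob m
            have hfint' : Integrable f ((P y).bind ⇑(iterK hPmeas m)) := by
              rw [show ⇑(iterK hPmeas m) = iter P m from rfl, ← iter_succ' hPmeas m y]
              exact hfiter f hf hfV (m+1) y
            have := integral_bind (μ := P y) (κ := iterK hPmeas m) hf hfint'
            rw [show ⇑(iterK hPmeas m) = iter P m from rfl] at this
            rw [show (PK y : Measure X) = P y from rfl, iter_succ' hPmeas m y, this]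
          rw [integral_congr_ae (Eventually.of_forall hinner)]
          have hih := ih n' (by omega) f hf hfV (m+1) x
          have hrs : r ρ a (n'+1) = ρ * r ρ a n' := r_step ρ a hres
          calc |∫ y, (∫ w, f w ∂iter P (m+1) y) ∂(L n' x) - ∫ y, f y ∂π|
              ≤ C0 * ρ ^ (m+1) * r ρ a n' * V x := hih
            _ = C0 * ρ ^ m * r ρ a (n'+1) * V x := by rw [hrs]; ring
  -- conclude
  intro ε hε
  obtain ⟨N, hN⟩ := C0r_small ρ a ha1 hamono hρ0 hρ1 C0 hC0 hdelta ε hε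
  refine ⟨N, fun n hn f hf hfV x => ?_⟩
  have hkey := key n f hf hfV 0 x
  have hsimp : ∀ y, ∫ z, f z ∂iter P 0 y = f y := fun y => by
    rw [show iter P 0 y = Measure.dirac y from rfl, integral_dirac' _ _ hf.stronglyMeasurable]
  rw [integral_congr_ae (Eventually.of_forall hsimp), pow_zero, mul_one] at hkey
  calc |∫ y, f y ∂(L n x) - ∫ y, f y ∂π| ≤ C0 * r ρ a n * V x := hkey
    _ ≤ ε * V x := mul_le_mul_of_nonneg_right (hN n hn) (hV0 x)

end ResamplingFromThePastLimit
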